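/- Let t ≥ 2 be an integer, n = 2t, let α ∈ (1,2) be real, let W be a probability mass function on 𝔽_2^n, and let 𝟏 ∈ 𝔽_2^n denote the all-one vector. Let ℬ be a nonempty finite collection of t-dimensional 𝔽_2-linear subspaces C of 𝔽_2^n such that: (i) every C ∈ ℬ satisfies C = C^⊥ and contains 𝟏, and every codeword of every C ∈ ℬ has Hamming weight divisible by 4; (ii) there is an integer M with M·(2^{t−2} + 1) = |ℬ| such that every v ∈ 𝔽_2^n \ {0, 𝟏} of Hamming weight divisible by 4 belongs to exactly M members of ℬ. Then (1/|ℬ|) ∑_{C ∈ ℬ} 2^{n(α−1)−tα} ∑_{y ∈ 𝔽_2^n} ( ∑_{c ∈ C} W(y + c) )^α ≤ 2^{(α−1)t} · ∑_{x ∈ 𝔽_2^n} W(x)^α + 2^{(α−1)t} · ∑_{z ∈ 𝔽_2^n} W(z)·W(z + 𝟏)^{α−1} + ( 2^t/(2^{t−2} + 1) )^{α−1}. -/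

import Mathlib

open scoped Classical
open Finset

private lemma rpow_subadd {p a b : ℝ} (hp0 : 0 ≤ p) (hp1 : p ≤ 1) (ha : 0 ≤ a) (hb : 0 ≤ b) :
    (a + b) ^ p ≤ a ^ p + b ^ p := by
  have h := NNReal.rpow_add_le_add_rpow a.toNNReal b.toNNReal hp0 hp1
  rw [← Real.toNNReal_add ha hb] at h
  have h2 := NNReal.coe_le_coe.2 h
  rw [NNReal.coe_add] at h2
  simpa [NNReal.coe_rpow, Real.coe_toNNReal _ ha, Real.coe_toNNReal _ hb,
    Real.coe_toNNReal _ (add_nonneg ha hb)] using h2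

private lemma mean_rpow_le {ι : Type*} (s : Finset ι) (hs : s.Nonempty) (f : ι → ℝ)
    (hf : ∀ i ∈ s, 0 ≤ f i) {q : ℝ} (hq0 : 0 < q) (hq1 : q ≤ 1) :
    ∑ i ∈ s, (1 / (s.card : ℝ)) * f i ^ q ≤ (∑ i ∈ s, (1 / (s.card : ℝ)) * f i) ^ q := by
  have hcard : (0:ℝ) < s.card := by exact_mod_cast Finset.card_pos.2 hs
  have hw' : ∑ _i ∈ s, (1 / (s.card:ℝ)) = 1 := by
    rw [Finset.sum_const, nsmul_eq_mul]; field_simp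
  have hp : (1:ℝ) ≤ 1 / q := by rw [le_div_iff₀ hq0]; linarith
  have h := Real.arith_mean_le_rpow_mean s (fun _ => 1 / (s.card:ℝ)) (fun i => f i ^ q)
    (fun i _ => by positivity) hw' (fun i hi => Real.rpow_nonneg (hf i hi) q) hp
  rw [one_div_one_div] at h
  refine h.trans_eq ?_
  congr 1
  refine Finset.sum_congr rfl fun i hi => ?_
  rw [← Real.rpow_mul (hf i hi), mul_one_div, div_self hq0.ne', Real.rpow_one]

theorem smoothing_random_self_dual_code
    (t : ℕ) (ht : 2 ≤ t) (α : ℝ) (hα1 : 1 < α) (hα2 : α < 2)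
    (W : (Fin (2 * t) → ZMod 2) → ℝ) (hW : ∀ x, 0 ≤ W x)
    (hW1 : ∑ x : Fin (2 * t) → ZMod 2, W x = 1)
    (ℬ : Finset (Submodule (ZMod 2) (Fin (2 * t) → ZMod 2))) (hne : ℬ.Nonempty)
    (hdim : ∀ C ∈ ℬ, Module.finrank (ZMod 2) C = t)
    (hself : ∀ C ∈ ℬ, ∀ x : Fin (2 * t) → ZMod 2,
      x ∈ C ↔ ∀ c ∈ C, ∑ i, x i * c i = 0)
    (hone : ∀ C ∈ ℬ, (fun _ => 1 : Fin (2 * t) → ZMod 2) ∈ C)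
    (hdiv4 : ∀ C ∈ ℬ, ∀ c ∈ C, 4 ∣ hammingNorm c)
    (hbal : ∃ M : ℕ, M * (2 ^ (t - 2) + 1) = ℬ.card ∧
      ∀ v : Fin (2 * t) → ZMod 2, v ≠ 0 → v ≠ (fun _ => 1) → 4 ∣ hammingNorm v →
        (ℬ.filter (fun C => v ∈ C)).card = M) :
    (1 / (ℬ.card : ℝ)) *
      ∑ C ∈ ℬ,
        (2 : ℝ) ^ (((2 * t : ℕ) : ℝ) * (α - 1) - (t : ℝ) * α) *
          ∑ y : Fin (2 * t) → ZMod 2,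
            (∑ c ∈ Finset.univ.filter (fun c : Fin (2 * t) → ZMod 2 => c ∈ C),
              W (y + c)) ^ α
    ≤ (2 : ℝ) ^ ((α - 1) * (t : ℝ)) * (∑ x : Fin (2 * t) → ZMod 2, W x ^ α)
      + (2 : ℝ) ^ ((α - 1) * (t : ℝ)) *
          (∑ z : Fin (2 * t) → ZMod 2,
            W z * W (z + (fun _ => 1)) ^ (α - 1))
      + ((2 : ℝ) ^ t / ((2 : ℝ) ^ (t - 2) + 1)) ^ (α - 1) := by
  obtain ⟨M, hM, hMcount⟩ := hbal
  have h2t : 0 < 2 * t := by omega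
  set q : ℝ := α - 1 with hq
  have hq0 : 0 < q := by simp only [hq]; linarith
  have hq1 : q ≤ 1 := by simp only [hq]; linarith
  set e : Fin (2 * t) → ZMod 2 := (fun _ => 1) with he
  set N : ℕ := ℬ.card with hN
  have hNpos : (0:ℝ) < N := by exact_mod_cast Finset.card_pos.2 hne
  -- basic group facts
  have haddself : ∀ v : Fin (2 * t) → ZMod 2, v + v = 0 := by
    intro v; funext i
    have h2 : ∀ a : ZMod 2, a + a = 0 := by decide
    exact h2 (v i)
  have hcc : ∀ a b : Fin (2 * t) → ZMod 2, a + (a + b) = b := by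
    intro a b; rw [← add_assoc, haddself, zero_add]
  have hene : e ≠ 0 := by
    intro h
    have h1 : (1 : ZMod 2) = 0 := congrFun h ⟨0, h2t⟩
    exact absurd h1 (by decide)
  -- the code as a finset, and the remainder function
  set S : Submodule (ZMod 2) (Fin (2 * t) → ZMod 2) → Finset (Fin (2 * t) → ZMod 2) :=
    fun C => Finset.univ.filter (fun c => c ∈ C) with hS
  have hmemS : ∀ C, ∀ x, x ∈ S C ↔ x ∈ C := by
    intro C x; simp [hS]
  set R : Submodule (ZMod 2) (Fin (2 * t) → ZMod 2) → (Fin (2 * t) → ZMod 2) → ℝ :=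
    fun C x => ∑ v ∈ ((S C).erase e).erase 0, W (x + v) with hR
  have hRnonneg : ∀ C x, 0 ≤ R C x := fun C x => Finset.sum_nonneg fun v _ => hW _
  have hcardS : ∀ C ∈ ℬ, (S C).card = 2 ^ t := by
    intro C hC
    have hfin : Fintype.card C = 2 ^ t := by
      have hcard := Module.card_eq_pow_finrank (K := ZMod 2) (V := C)
      rwa [ZMod.card, hdim C hC] at hcard
    rw [← hfin]
    exact Eq.trans (Fintype.card_subtype _).symm (Fintype.card_congr (Equiv.refl _))
  -- decomposition of the code sum
  have hdecomp : ∀ C ∈ ℬ, ∀ c ∈ S C, ∀ y : Fin (2 * t) → ZMod 2,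
      ∑ c' ∈ S C, W (y + c') = W (y + c) + (W (y + c + e) + R C (y + c)) := by
    intro C hC c hc y
    have hcC : c ∈ C := (hmemS C c).1 hc
    have hceS : c + e ∈ S C := (hmemS C _).2 (C.add_mem hcC (hone C hC))
    have hcene : c + e ≠ c := by
      intro h
      exact hene (by rw [← hcc c e, h, haddself])
    rw [← Finset.add_sum_erase _ _ hc,
      ← Finset.add_sum_erase _ _ (Finset.mem_erase.2 ⟨hcene, hceS⟩)]
    congr 1
    congr 1
    · rw [add_assoc]
    · rw [hR]
      refine (Finset.sum_nbij' (fun c' => c + c') (fun v => c + v) ?_ ?_ ?_ ?_ ?_).symm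
      · intro v hv
        rw [Finset.mem_erase] at hv ⊢
        obtain ⟨hv0, hv'⟩ := hv
        rw [Finset.mem_erase] at hv'
        obtain ⟨hve, hvS⟩ := hv'
        refine ⟨?_, Finset.mem_erase.2 ⟨?_, (hmemS C _).2 (C.add_mem hcC ((hmemS C v).1 hvS))⟩⟩
        · intro h
          replace h : c + v = c + e := h
          exact hve (by rw [← hcc c v, h, hcc c e])
        · intro h
          replace h : c + v = c := h
          exact hv0 (by rw [← hcc c v, h, haddself])
      · intro a ha
        rw [Finset.mem_erase] at ha
        obtain ⟨hace, ha'⟩ := ha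
        rw [Finset.mem_erase] at ha'
        obtain ⟨hac, haS⟩ := ha'
        rw [Finset.mem_erase]
        refine ⟨?_, Finset.mem_erase.2 ⟨?_, (hmemS C _).2 (C.add_mem hcC ((hmemS C a).1 haS))⟩⟩
        · intro h
          replace h : c + a = 0 := h
          exact hac (by rw [← hcc c a, h, add_zero])
        · intro h
          replace h : c + a = e := h
          exact hace (by rw [← hcc c a, h])
      · intro v _; exact hcc c v
      · intro a _; exact hcc c a
      · intro v _
        congr 1
        rw [add_assoc]

  -- per-code bound
  have hα' : α = 1 + q := by rw [hq]; ring
  have h1q : (1:ℝ) + q ≠ 0 := by positivity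
  have hperC : ∀ C ∈ ℬ,
      ∑ y : Fin (2 * t) → ZMod 2, (∑ c ∈ S C, W (y + c)) ^ α
        ≤ (2:ℝ)^t * ((∑ x : Fin (2 * t) → ZMod 2, W x ^ α)
            + (∑ x : Fin (2 * t) → ZMod 2, W x * W (x + e) ^ q)
            + ∑ x : Fin (2 * t) → ZMod 2, W x * R C x ^ q) := by
    intro C hC
    have step1 : ∀ y : Fin (2 * t) → ZMod 2, (∑ c ∈ S C, W (y + c)) ^ α
        ≤ ∑ c ∈ S C, W (y + c) * (W (y + c) ^ q + W (y + c + e) ^ q + R C (y + c) ^ q) := by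
      intro y
      have hT : 0 ≤ ∑ c ∈ S C, W (y + c) := Finset.sum_nonneg fun c _ => hW _
      rw [hα', Real.rpow_add' hT h1q, Real.rpow_one, Finset.sum_mul]
      refine Finset.sum_le_sum fun c hc => ?_
      refine mul_le_mul_of_nonneg_left ?_ (hW _)
      rw [hdecomp C hC c hc y]
      calc (W (y + c) + (W (y + c + e) + R C (y + c))) ^ q
          ≤ W (y + c) ^ q + (W (y + c + e) + R C (y + c)) ^ q :=
            rpow_subadd hq0.le hq1 (hW _) (add_nonneg (hW _) (hRnonneg _ _))
        _ ≤ W (y + c) ^ q + (W (y + c + e) ^ q + R C (y + c) ^ q) := by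
            have h2 := rpow_subadd hq0.le hq1 (hW (y + c + e)) (hRnonneg C (y + c))
            linarith
        _ = W (y + c) ^ q + W (y + c + e) ^ q + R C (y + c) ^ q := by ring
    calc ∑ y : Fin (2 * t) → ZMod 2, (∑ c ∈ S C, W (y + c)) ^ α
        ≤ ∑ y : Fin (2 * t) → ZMod 2, ∑ c ∈ S C,
            W (y + c) * (W (y + c) ^ q + W (y + c + e) ^ q + R C (y + c) ^ q) :=
          Finset.sum_le_sum fun y _ => step1 y
      _ = ∑ c ∈ S C, ∑ y : Fin (2 * t) → ZMod 2,
            W (y + c) * (W (y + c) ^ q + W (y + c + e) ^ q + R C (y + c) ^ q) :=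
          Finset.sum_comm
      _ = ∑ c ∈ S C, ∑ x : Fin (2 * t) → ZMod 2,
            W x * (W x ^ q + W (x + e) ^ q + R C x ^ q) := by
          refine Finset.sum_congr rfl fun c _ => ?_
          exact Fintype.sum_equiv (Equiv.addRight c) _ _ (fun y => rfl)
      _ = ((S C).card : ℝ) * ∑ x : Fin (2 * t) → ZMod 2,
            W x * (W x ^ q + W (x + e) ^ q + R C x ^ q) := by
          rw [Finset.sum_const, nsmul_eq_mul]
      _ = (2:ℝ)^t * ∑ x : Fin (2 * t) → ZMod 2,
            W x * (W x ^ q + W (x + e) ^ q + R C x ^ q) := by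
          rw [hcardS C hC]; push_cast; ring
      _ = _ := by
          congr 1
          rw [← Finset.sum_add_distrib, ← Finset.sum_add_distrib]
          refine Finset.sum_congr rfl fun x _ => ?_
          rw [hα', Real.rpow_add' (hW x) h1q, Real.rpow_one]
          ring
  -- counting / mean bound
  have hd : (0:ℝ) < (2:ℝ)^(t-2) + 1 := by positivity
  have hMN : (M:ℝ) / N = 1 / ((2:ℝ)^(t-2) + 1) := by
    have h1 : ((M:ℝ)) * ((2:ℝ)^(t-2) + 1) = N := by exact_mod_cast hM
    rw [div_eq_div_iff hNpos.ne' hd.ne', one_mul, h1]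
  have hmean : ∀ x : Fin (2 * t) → ZMod 2,
      ∑ C ∈ ℬ, (1/(N:ℝ)) * R C x ≤ 1 / ((2:ℝ)^(t-2) + 1) := by
    intro x
    have hcount : ∀ v : Fin (2 * t) → ZMod 2, v ≠ 0 → v ≠ e →
        (((ℬ.filter (fun C => v ∈ C)).card : ℝ)) ≤ M := by
      intro v hv0 hve
      by_cases h4 : 4 ∣ hammingNorm v
      · rw [hMcount v hv0 hve h4]
      · have hemp : ℬ.filter (fun C => v ∈ C) = ∅ := by
          rw [Finset.filter_eq_empty_iff]
          intro C hC hvC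
          exact h4 (hdiv4 C hC v hvC)
        rw [hemp]
        simp
    have hswap : ∑ C ∈ ℬ, R C x
        = ∑ v ∈ (Finset.univ.erase e).erase 0,
            ((ℬ.filter (fun C => v ∈ C)).card : ℝ) * W (x + v) := by
      have hRalt : ∀ C ∈ ℬ, R C x
          = ∑ v ∈ (Finset.univ.erase e).erase 0, if v ∈ C then W (x + v) else 0 := by
        intro C hC
        simp only [hR]
        rw [← Finset.sum_filter]
        congr 1
        ext v
        simp only [Finset.mem_erase, Finset.mem_filter, Finset.mem_univ, hmemS, true_and]
        tauto
      rw [Finset.sum_congr rfl hRalt, Finset.sum_comm]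
      refine Finset.sum_congr rfl fun v hv => ?_
      rw [← Finset.sum_filter, Finset.sum_const, nsmul_eq_mul]
    have hle : ∑ C ∈ ℬ, R C x ≤ (M:ℝ) := by
      rw [hswap]
      calc ∑ v ∈ (Finset.univ.erase e).erase 0,
            ((ℬ.filter (fun C => v ∈ C)).card : ℝ) * W (x + v)
          ≤ ∑ v ∈ (Finset.univ.erase e).erase 0, (M:ℝ) * W (x + v) := by
            refine Finset.sum_le_sum fun v hv => ?_
            have hv1 := Finset.mem_erase.1 hv
            have hv2 := Finset.mem_erase.1 hv1.2
            exact mul_le_mul_of_nonneg_right (hcount v hv1.1 hv2.1) (hW _)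
        _ = (M:ℝ) * ∑ v ∈ (Finset.univ.erase e).erase 0, W (x + v) := by
            rw [Finset.mul_sum]
        _ ≤ (M:ℝ) * 1 := by
            refine mul_le_mul_of_nonneg_left ?_ (by positivity)
            calc ∑ v ∈ (Finset.univ.erase e).erase 0, W (x + v)
                ≤ ∑ v : Fin (2 * t) → ZMod 2, W (x + v) :=
                  Finset.sum_le_sum_of_subset_of_nonneg
                    (fun v _ => Finset.mem_univ v) (fun v _ _ => hW _)
              _ = 1 := by
                  refine Eq.trans (Fintype.sum_equiv (Equiv.addLeft x) _ W fun v => rfl) hW1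
        _ = (M:ℝ) := mul_one _
    rw [← Finset.mul_sum]
    calc (1/(N:ℝ)) * ∑ C ∈ ℬ, R C x ≤ (1/(N:ℝ)) * (M:ℝ) :=
          mul_le_mul_of_nonneg_left hle (one_div_pos.2 hNpos).le
      _ = (M:ℝ) / N := by ring
      _ = 1 / ((2:ℝ)^(t-2) + 1) := hMN
  -- Jensen per point
  have hjensen : ∀ x : Fin (2 * t) → ZMod 2,
      ∑ C ∈ ℬ, (1/(N:ℝ)) * R C x ^ q ≤ (1 / ((2:ℝ)^(t-2) + 1)) ^ q := by
    intro x
    have h1 := mean_rpow_le ℬ hne (fun C => R C x) (fun C _ => hRnonneg C x) hq0 hq1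
    refine le_trans h1 ?_
    refine Real.rpow_le_rpow (Finset.sum_nonneg fun C _ =>
      mul_nonneg (one_div_pos.2 hNpos).le (hRnonneg C x)) ?_ hq0.le
    exact hmean x
  -- combine over x
  have hP2 : ∑ C ∈ ℬ, (1/(N:ℝ)) * (∑ x : Fin (2 * t) → ZMod 2, W x * R C x ^ q)
      ≤ (1/((2:ℝ)^(t-2) + 1)) ^ q := by
    have hsw : ∑ C ∈ ℬ, (1/(N:ℝ)) * (∑ x : Fin (2 * t) → ZMod 2, W x * R C x ^ q)
        = ∑ x : Fin (2 * t) → ZMod 2, W x * (∑ C ∈ ℬ, (1/(N:ℝ)) * R C x ^ q) := by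
      simp_rw [Finset.mul_sum]
      rw [Finset.sum_comm]
      exact Finset.sum_congr rfl fun x _ => Finset.sum_congr rfl fun C _ => by ring
    rw [hsw]
    calc ∑ x : Fin (2 * t) → ZMod 2, W x * (∑ C ∈ ℬ, (1/(N:ℝ)) * R C x ^ q)
        ≤ ∑ x : Fin (2 * t) → ZMod 2, W x * (1/((2:ℝ)^(t-2) + 1)) ^ q :=
          Finset.sum_le_sum fun x _ => mul_le_mul_of_nonneg_left (hjensen x) (hW x)
      _ = (1/((2:ℝ)^(t-2) + 1)) ^ q := by rw [← Finset.sum_mul, hW1, one_mul]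
  -- constant manipulations
  have hKt : (2:ℝ) ^ ((((2 * t : ℕ)):ℝ) * q - (t:ℝ) * α) * (2:ℝ)^t
      = (2:ℝ) ^ (q * (t:ℝ)) := by
    rw [← Real.rpow_natCast 2 t, ← Real.rpow_add two_pos]
    congr 1
    push_cast
    rw [hq]; ring
  have hP3 : (2:ℝ) ^ (q * (t:ℝ)) * (1/((2:ℝ)^(t-2) + 1)) ^ q
      = ((2:ℝ)^t / ((2:ℝ)^(t-2) + 1)) ^ q := by
    have h2t' : ((2:ℝ)^t) ^ q = (2:ℝ) ^ (q * (t:ℝ)) := by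
      rw [← Real.rpow_natCast 2 t, ← Real.rpow_mul (by norm_num : (0:ℝ) ≤ 2), mul_comm]
    rw [← h2t', ← Real.mul_rpow (by positivity) (by positivity), mul_one_div]
  -- structural bound
  have hApos : (0:ℝ) < (2:ℝ) ^ (q * (t:ℝ)) := Real.rpow_pos_of_pos two_pos _
  have hP1 : (1/(N:ℝ)) * ∑ C ∈ ℬ,
        (2:ℝ) ^ ((((2 * t : ℕ)):ℝ) * q - (t:ℝ) * α) *
          ∑ y : Fin (2 * t) → ZMod 2,
            (∑ c ∈ Finset.univ.filter (fun c : Fin (2 * t) → ZMod 2 => c ∈ C),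
              W (y + c)) ^ α
      ≤ (2:ℝ) ^ (q * (t:ℝ)) * ((∑ x : Fin (2 * t) → ZMod 2, W x ^ α)
          + (∑ x : Fin (2 * t) → ZMod 2, W x * W (x + e) ^ q))
        + (2:ℝ) ^ (q * (t:ℝ)) *
            ∑ C ∈ ℬ, (1/(N:ℝ)) * (∑ x : Fin (2 * t) → ZMod 2, W x * R C x ^ q) := by
    have hK : (0:ℝ) ≤ (2:ℝ) ^ ((((2 * t : ℕ)):ℝ) * q - (t:ℝ) * α) :=
      le_of_lt (Real.rpow_pos_of_pos two_pos _)
    calc (1/(N:ℝ)) * ∑ C ∈ ℬ,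
        (2:ℝ) ^ ((((2 * t : ℕ)):ℝ) * q - (t:ℝ) * α) *
          ∑ y : Fin (2 * t) → ZMod 2,
            (∑ c ∈ Finset.univ.filter (fun c : Fin (2 * t) → ZMod 2 => c ∈ C),
              W (y + c)) ^ α
        = ∑ C ∈ ℬ, (1/(N:ℝ)) *
            ((2:ℝ) ^ ((((2 * t : ℕ)):ℝ) * q - (t:ℝ) * α) *
              ∑ y : Fin (2 * t) → ZMod 2, (∑ c ∈ S C, W (y + c)) ^ α) := by
          rw [Finset.mul_sum]
      _ ≤ ∑ C ∈ ℬ, (1/(N:ℝ)) *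
            ((2:ℝ) ^ ((((2 * t : ℕ)):ℝ) * q - (t:ℝ) * α) *
              ((2:ℝ)^t * ((∑ x : Fin (2 * t) → ZMod 2, W x ^ α)
                + (∑ x : Fin (2 * t) → ZMod 2, W x * W (x + e) ^ q)
                + ∑ x : Fin (2 * t) → ZMod 2, W x * R C x ^ q))) := by
          refine Finset.sum_le_sum fun C hC => ?_
          exact mul_le_mul_of_nonneg_left
            (mul_le_mul_of_nonneg_left (hperC C hC) hK) (one_div_pos.2 hNpos).le
      _ = ∑ C ∈ ℬ, ((1/(N:ℝ)) * ((2:ℝ) ^ (q * (t:ℝ)) *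
              ((∑ x : Fin (2 * t) → ZMod 2, W x ^ α)
                + (∑ x : Fin (2 * t) → ZMod 2, W x * W (x + e) ^ q)))
            + (2:ℝ) ^ (q * (t:ℝ)) *
              ((1/(N:ℝ)) * (∑ x : Fin (2 * t) → ZMod 2, W x * R C x ^ q))) := by
          refine Finset.sum_congr rfl fun C _ => ?_
          rw [← mul_assoc ((2:ℝ) ^ ((((2 * t : ℕ)):ℝ) * q - (t:ℝ) * α)), hKt]
          ring
      _ = (N:ℝ) * ((1/(N:ℝ)) * ((2:ℝ) ^ (q * (t:ℝ)) *
              ((∑ x : Fin (2 * t) → ZMod 2, W x ^ α)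
                + (∑ x : Fin (2 * t) → ZMod 2, W x * W (x + e) ^ q))))
          + (2:ℝ) ^ (q * (t:ℝ)) *
              ∑ C ∈ ℬ, (1/(N:ℝ)) * (∑ x : Fin (2 * t) → ZMod 2, W x * R C x ^ q) := by
          rw [Finset.sum_add_distrib, Finset.sum_const, nsmul_eq_mul, ← Finset.mul_sum, hN]
      _ = (2:ℝ) ^ (q * (t:ℝ)) * ((∑ x : Fin (2 * t) → ZMod 2, W x ^ α)
              + (∑ x : Fin (2 * t) → ZMod 2, W x * W (x + e) ^ q))
          + (2:ℝ) ^ (q * (t:ℝ)) *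
              ∑ C ∈ ℬ, (1/(N:ℝ)) * (∑ x : Fin (2 * t) → ZMod 2, W x * R C x ^ q) := by
          rw [← mul_assoc, mul_one_div, div_self (ne_of_gt hNpos), one_mul]
  -- finish
  have hfin := mul_le_mul_of_nonneg_left hP2 hApos.le
  rw [hP3] at hfin
  calc (1/(N:ℝ)) * ∑ C ∈ ℬ,
        (2:ℝ) ^ ((((2 * t : ℕ)):ℝ) * q - (t:ℝ) * α) *
          ∑ y : Fin (2 * t) → ZMod 2,
            (∑ c ∈ Finset.univ.filter (fun c : Fin (2 * t) → ZMod 2 => c ∈ C),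
              W (y + c)) ^ α
      ≤ (2:ℝ) ^ (q * (t:ℝ)) * ((∑ x : Fin (2 * t) → ZMod 2, W x ^ α)
          + (∑ x : Fin (2 * t) → ZMod 2, W x * W (x + e) ^ q))
        + (2:ℝ) ^ (q * (t:ℝ)) *
            ∑ C ∈ ℬ, (1/(N:ℝ)) * (∑ x : Fin (2 * t) → ZMod 2, W x * R C x ^ q) := hP1
    _ ≤ (2:ℝ) ^ (q * (t:ℝ)) * ((∑ x : Fin (2 * t) → ZMod 2, W x ^ α)
          + (∑ x : Fin (2 * t) → ZMod 2, W x * W (x + e) ^ q))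
        + ((2:ℝ)^t / ((2:ℝ)^(t-2) + 1)) ^ q := by linarith
    _ = (2:ℝ) ^ (q * (t:ℝ)) * (∑ x : Fin (2 * t) → ZMod 2, W x ^ α)
        + (2:ℝ) ^ (q * (t:ℝ)) * (∑ x : Fin (2 * t) → ZMod 2, W x * W (x + e) ^ q)
        + ((2:ℝ)^t / ((2:ℝ)^(t-2) + 1)) ^ q := by ring
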